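/- arXiv:1705.06134 — 5 statements merged into one kernel-verified Lean document; each statement's English description precedes it below -/
import Mathlib

section
/- Let D be an integrally closed integral domain and M an n × n matrix over D. Then the null ideal N_D(M) = {f(T) ∈ D[T] : f(M) = 0} is a principal ideal of the polynomial ring D[T]. -/
open Polynomial

/-- The null ideal `{f ∈ D[T] : f(M) = 0}` of a square matrix `M` over an integrally
closed domain `D` is a principal ideal of `D[T]`. -/
theorem null_ideal_isPrincipal_of_integrallyClosed
    (D : Type*) [CommRing D] [IsDomain D] [IsIntegrallyClosed D]
    (n : ℕ) (hn : 1 ≤ n) (M : Matrix (Fin n) (Fin n) D) :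
    (RingHom.ker (Polynomial.aeval M : Polynomial D →ₐ[D] Matrix (Fin n) (Fin n) D)).IsPrincipal := by
  classical
  let K := FractionRing D
  let φ : D →+* K := algebraMap D K
  have hφ : Function.Injective φ := IsFractionRing.injective D K
  set M' : Matrix (Fin n) (Fin n) K := M.map φ with hM'
  have hint : IsIntegral K M' := ⟨M'.charpoly, M'.charpoly_monic, M'.aeval_self_charpoly⟩
  set mu : K[X] := minpoly K M' with hmu
  have hmumonic : mu.Monic := minpoly.monic hint
  have hdvd : mu ∣ (M.charpoly).map φ := by
    rw [← Matrix.charpoly_map M φ]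
    exact minpoly.dvd K M' M'.aeval_self_charpoly
  obtain ⟨g, hg⟩ := IsIntegrallyClosed.eq_map_mul_C_of_dvd K M.charpoly_monic hdvd
  rw [hmumonic.leadingCoeff, map_one, mul_one] at hg
  have hgmonic : g.Monic := by
    apply Polynomial.monic_of_injective hφ
    rw [hg]; exact hmumonic
  -- key commuting fact
  have comm : ∀ f : D[X], (φ.mapMatrix : Matrix (Fin n) (Fin n) D →+* Matrix (Fin n) (Fin n) K)
      (Polynomial.aeval M f) = Polynomial.aeval M' (f.map φ) := by
    intro f
    rw [Polynomial.aeval_def, Polynomial.aeval_def, Polynomial.hom_eval₂, Polynomial.eval₂_map]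
    congr 1
    ext d : 1
    simp [Matrix.algebraMap_matrix_apply, RingHom.mapMatrix_apply, Matrix.map_apply]
    ext i j
    by_cases h : i = j <;> simp [Matrix.algebraMap_matrix_apply, h, Matrix.map_apply]
  have hmapinj : Function.Injective
      (φ.mapMatrix : Matrix (Fin n) (Fin n) D →+* Matrix (Fin n) (Fin n) K) := by
    intro A B h
    ext i j
    exact hφ (congrFun (congrFun (congrArg Matrix.of.symm h) i) j)
  refine ⟨⟨g, ?_⟩⟩
  ext f
  rw [RingHom.mem_ker, Ideal.submodule_span_eq, Ideal.mem_span_singleton]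
  constructor
  · intro hf
    have h1 : Polynomial.aeval M' (f.map φ) = 0 := by
      rw [← comm f]; rw [hf, map_zero]
    have h2 : mu ∣ f.map φ := minpoly.dvd K M' h1
    rw [← hg] at h2
    exact (Polynomial.map_dvd_map φ hφ hgmonic).mp h2
  · rintro ⟨h, rfl⟩
    have hg0 : Polynomial.aeval M g = 0 := by
      apply hmapinj
      rw [comm g, map_zero, hg]
      exact minpoly.aeval K M'
    simp [map_mul, hg0]
end

section
/- Let M be an n × n matrix with integer entries and let m ∈ ℤ[T] be the monic minimal polynomial of M over ℚ (which has integer coefficients). Then for all but finitely many prime numbers p, the reduction of m modulo p equals the minimal polynomial over the field ℤ/pℤ of the reduction M₍p₎ of M modulo p. -/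
open Polynomial Matrix

lemma matrix_map_cast_mul {R : Type*} [CommRing R] {a b c : Type*} [Fintype b]
    (X : Matrix a b ℤ) (Y : Matrix b c ℤ) :
    (X * Y).map (Int.cast : ℤ → R) = X.map (Int.cast : ℤ → R) * Y.map (Int.cast : ℤ → R) := by
  ext i j
  simp [Matrix.mul_apply]

lemma matrix_map_cast_one {R : Type*} [CommRing R] {a : Type*} [Fintype a] [DecidableEq a] :
    (1 : Matrix a a ℤ).map (Int.cast : ℤ → R) = 1 := by
  ext i j
  by_cases h : i = j <;> simp [Matrix.one_apply, h]

lemma matrix_map_cast_pow {R : Type*} [CommRing R] {n : ℕ}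
    (X : Matrix (Fin n) (Fin n) ℤ) (i : ℕ) :
    (X ^ i).map (Int.cast : ℤ → R) = (X.map Int.cast) ^ i := by
  induction i with
  | zero => rw [pow_zero, pow_zero]; exact matrix_map_cast_one
  | succ k ih => rw [pow_succ, pow_succ, matrix_map_cast_mul, ih]

/-- Mapping matrices entrywise by the integer cast commutes with `aeval` of an
integer polynomial. -/
lemma aeval_matrix_cast {R : Type*} [CommRing R] {n : ℕ} (M : Matrix (Fin n) (Fin n) ℤ)
    (m : Polynomial ℤ) :
    Polynomial.aeval (M.map (Int.cast : ℤ → R)) m =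
      (Polynomial.aeval M m).map (Int.cast : ℤ → R) := by
  rw [Polynomial.aeval_eq_sum_range (x := M.map (Int.cast : ℤ → R)),
    Polynomial.aeval_eq_sum_range (x := M)]
  ext j k
  simp only [Matrix.map_apply, Matrix.sum_apply, Matrix.smul_apply, Int.cast_sum]
  refine Finset.sum_congr rfl fun i _ => ?_
  rw [← matrix_map_cast_pow, Matrix.map_apply, smul_eq_mul, zsmul_eq_mul]
  push_cast
  ring

/-- Let `m ∈ ℤ[T]` be the monic minimal polynomial over `ℚ` of an integer matrix `M`.
For all but finitely many primes `p`, the reduction of `m` mod `p` is the minimal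
polynomial over `ℤ/pℤ` of the reduction of `M` mod `p`. -/
theorem minpoly_mod_p_eq_for_all_but_finitely_many_primes
    (n : ℕ) (M : Matrix (Fin n) (Fin n) ℤ) (m : Polynomial ℤ) (hmonic : m.Monic)
    (hm : m.map (Int.castRingHom ℚ) = minpoly ℚ (M.map (Int.cast : ℤ → ℚ))) :
    {p : ℕ | p.Prime ∧
        m.map (Int.castRingHom (ZMod p)) ≠
          minpoly (ZMod p) (M.map (Int.cast : ℤ → ZMod p))}.Finite := by
  classical
  set d := m.natDegree with hd
  set Mq : Matrix (Fin n) (Fin n) ℚ := M.map (Int.cast : ℤ → ℚ) with hMq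
  -- `m` annihilates `M` over ℤ.
  have hM0 : Polynomial.aeval M m = 0 := by
    have h1 : Polynomial.aeval Mq m = 0 := by
      have h := minpoly.aeval ℚ Mq
      rw [← hm, show (Int.castRingHom ℚ) = algebraMap ℤ ℚ from rfl,
        Polynomial.aeval_map_algebraMap] at h
      exact h
    rw [hMq, aeval_matrix_cast] at h1
    have hinj : Function.Injective (fun X : Matrix (Fin n) (Fin n) ℤ =>
        X.map (Int.cast : ℤ → ℚ)) :=
      Matrix.map_injective (fun a b h => by exact_mod_cast h)
    have : (Polynomial.aeval M m).map (Int.cast : ℤ → ℚ) =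
        (0 : Matrix (Fin n) (Fin n) ℤ).map (Int.cast : ℤ → ℚ) := by
      simpa using h1
    exact hinj this
  -- powers of `M` as integer row vectors
  set Az : Matrix (Fin n × Fin n) (Fin d) ℤ :=
    Matrix.of (fun jk i => (M ^ (i : ℕ)) jk.1 jk.2) with hAz
  set Aq : Matrix (Fin n × Fin n) (Fin d) ℚ := Az.map (Int.cast : ℤ → ℚ) with hAq
  -- columns of Aq are linearly independent over ℚ
  have hinj : ∀ x : Fin d → ℚ, Aq *ᵥ x = 0 → x = 0 := by
    intro x hx
    set q : Polynomial ℚ := ∑ i : Fin d, Polynomial.C (x i) * Polynomial.X ^ (i : ℕ) with hq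
    have hsum : (∑ i : Fin d, x i • Mq ^ (i : ℕ)) = 0 := by
      ext j k
      have h := congrFun hx (j, k)
      simp only [Matrix.mulVec, dotProduct, hAq, hAz, Matrix.map_apply,
        Matrix.of_apply, Pi.zero_apply] at h
      simp only [Matrix.sum_apply, Matrix.smul_apply, smul_eq_mul, hMq,
        ← matrix_map_cast_pow, Matrix.map_apply, Matrix.zero_apply]
      rw [← h]
      exact Finset.sum_congr rfl fun i _ => mul_comm _ _
    have haev : Polynomial.aeval Mq q = 0 := by
      rw [hq]
      simp only [map_sum, _root_.map_mul, Polynomial.aeval_C, map_pow, Polynomial.aeval_X]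
      simpa [Algebra.smul_def] using hsum
    have hdeg : q.degree < (minpoly ℚ Mq).degree := by
      rw [← hm, hmonic.degree_map, Polynomial.degree_eq_natDegree hmonic.ne_zero]
      refine lt_of_le_of_lt (Polynomial.degree_sum_le _ _) ?_
      rw [Finset.sup_lt_iff (by exact_mod_cast WithBot.bot_lt_coe (d : ℕ))]
      intro i _
      refine lt_of_le_of_lt (Polynomial.degree_C_mul_X_pow_le _ _) ?_
      exact_mod_cast Nat.cast_lt.mpr i.2
    have hq0 : q = 0 := by
      by_contra hne
      exact absurd (minpoly.degree_le_of_ne_zero ℚ Mq hne haev) (not_le.mpr hdeg)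
    funext i
    have h := congrArg (fun r => Polynomial.coeff r (i : ℕ)) hq0
    simpa [hq, Polynomial.coeff_C_mul, Polynomial.coeff_X_pow, Fin.val_eq_val,
      Finset.sum_ite_eq'] using h
  -- left inverse over ℚ
  obtain ⟨g, hg⟩ := (Matrix.toLin' Aq).exists_leftInverse_of_injective
    (by rw [Matrix.toLin'_apply', Matrix.ker_mulVecLin_eq_bot_iff]; exact hinj)
  set B : Matrix (Fin d) (Fin n × Fin n) ℚ := LinearMap.toMatrix' g with hB
  have hBA : B * Aq = 1 := by
    apply Matrix.toLin'.injective
    rw [Matrix.toLin'_mul, Matrix.toLin'_one, hB, Matrix.toLin'_toMatrix', hg]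
  -- clear denominators
  set c : ℤ := ∏ q : Fin d × (Fin n × Fin n), ((B q.1 q.2).den : ℤ) with hc
  have hcpos : 0 < c := Finset.prod_pos (fun q _ => by exact_mod_cast (B q.1 q.2).pos)
  have hcdvd : ∀ i jk, ((B i jk).den : ℤ) ∣ c := fun i jk =>
    Finset.dvd_prod_of_mem _ (Finset.mem_univ (i, jk))
  set C : Matrix (Fin d) (Fin n × Fin n) ℤ :=
    Matrix.of (fun i jk => c / ((B i jk).den : ℤ) * (B i jk).num) with hC
  have hCq : ∀ i jk, ((C i jk : ℤ) : ℚ) = (c : ℚ) * B i jk := by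
    intro i jk
    obtain ⟨k, hk⟩ := hcdvd i jk
    have hden : ((B i jk).den : ℤ) ≠ 0 := by exact_mod_cast (B i jk).den_nz
    rw [hC, Matrix.of_apply, hk, Int.mul_ediv_cancel_left _ hden]
    have hdm : ((B i jk).den : ℚ) * B i jk = (B i jk).num := Rat.den_mul_eq_num _
    push_cast
    linear_combination (-(k : ℚ)) * hdm
  have hCA : C * Az = c • (1 : Matrix (Fin d) (Fin d) ℤ) := by
    apply Matrix.map_injective (f := (Int.cast : ℤ → ℚ)) (fun a b h => by exact_mod_cast h)
    show (C * Az).map (Int.cast : ℤ → ℚ)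
      = (c • (1 : Matrix (Fin d) (Fin d) ℤ)).map (Int.cast : ℤ → ℚ)
    rw [matrix_map_cast_mul]
    have h2 : C.map (Int.cast : ℤ → ℚ) = (c : ℚ) • B := by
      ext i jk; simpa using hCq i jk
    rw [h2, ← hAq, Matrix.smul_mul, hBA]
    ext i j
    simp only [Matrix.smul_apply, Matrix.map_apply, Matrix.one_apply, smul_eq_mul]
    split <;> simp
  -- the main claim for good primes
  have key : ∀ p : ℕ, p.Prime → ¬ ((p : ℤ) ∣ c) →
      m.map (Int.castRingHom (ZMod p)) = minpoly (ZMod p) (M.map (Int.cast : ℤ → ZMod p)) := by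
    intro p hp hpc
    haveI : Fact p.Prime := ⟨hp⟩
    set Mp : Matrix (Fin n) (Fin n) (ZMod p) := M.map (Int.cast : ℤ → ZMod p) with hMp
    set mp : Polynomial (ZMod p) := m.map (Int.castRingHom (ZMod p)) with hmp
    have hmpmonic : mp.Monic := hmonic.map _
    have haev : Polynomial.aeval Mp mp = 0 := by
      rw [hmp, show (Int.castRingHom (ZMod p)) = algebraMap ℤ (ZMod p) from rfl,
        Polynomial.aeval_map_algebraMap, hMp, aeval_matrix_cast, hM0]
      ext i j
      simp
    set μ : Polynomial (ZMod p) := minpoly (ZMod p) Mp with hμ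
    have hint : IsIntegral (ZMod p) Mp := ⟨mp, hmpmonic, haev⟩
    have hμmonic : μ.Monic := minpoly.monic hint
    have hdvd : μ ∣ mp := minpoly.dvd _ _ haev
    -- independence mod p
    have hCAp : C.map (Int.cast : ℤ → ZMod p) * Az.map (Int.cast : ℤ → ZMod p)
        = ((c : ℤ) : ZMod p) • (1 : Matrix (Fin d) (Fin d) (ZMod p)) := by
      rw [← matrix_map_cast_mul, hCA]
      ext i j
      simp only [Matrix.smul_apply, Matrix.map_apply, Matrix.one_apply, smul_eq_mul]
      split <;> simp
    have hc0 : ((c : ℤ) : ZMod p) ≠ 0 := by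
      rw [Ne, ZMod.intCast_zmod_eq_zero_iff_dvd]
      exact hpc
    have hindp : ∀ y : Fin d → ZMod p, (∑ i : Fin d, y i • Mp ^ (i : ℕ)) = 0 → y = 0 := by
      intro y hy
      have hAy : Az.map (Int.cast : ℤ → ZMod p) *ᵥ y = 0 := by
        funext jk
        have h := Matrix.ext_iff.mpr hy jk.1 jk.2
        simpa [Matrix.mulVec, dotProduct, hAz, hMp, ← matrix_map_cast_pow, mul_comm,
          Matrix.sum_apply] using h
      have h1 : ((c : ℤ) : ZMod p) • y = 0 := by
        have h2 := Matrix.mulVec_mulVec y (C.map (Int.cast : ℤ → ZMod p))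
          (Az.map (Int.cast : ℤ → ZMod p))
        rw [hCAp, hAy, Matrix.mulVec_zero] at h2
        simpa [Matrix.smul_mulVec, Matrix.one_mulVec] using h2.symm
      have := smul_eq_zero.mp h1
      tauto
    -- degree lower bound
    have hdlow : d ≤ μ.natDegree := by
      by_contra hlt
      push_neg at hlt
      have haevμ : Polynomial.aeval Mp μ = 0 := minpoly.aeval _ _
      have hsum : (∑ i : Fin d, μ.coeff (i : ℕ) • Mp ^ (i : ℕ)) = 0 := by
        rw [Fin.sum_univ_eq_sum_range (fun i => μ.coeff i • Mp ^ i) d,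
          ← Polynomial.aeval_eq_sum_range' hlt]
        exact haevμ
      have h0 := hindp (fun i => μ.coeff (i : ℕ)) hsum
      have h1 : μ.coeff μ.natDegree = 0 := congrFun h0 ⟨μ.natDegree, hlt⟩
      rw [hμmonic.coeff_natDegree] at h1
      exact one_ne_zero h1
    -- conclude equality
    have hmpne : mp ≠ 0 := hmpmonic.ne_zero
    have hdmp : mp.natDegree = d := hmonic.natDegree_map _
    have hdhigh : μ.natDegree ≤ d := hdmp ▸ Polynomial.natDegree_le_of_dvd hdvd hmpne
    obtain ⟨k, hk⟩ := hdvd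
    have hk0 : k ≠ 0 := fun h => hmpne (by rw [hk, h, mul_zero])
    have hkdeg : k.natDegree = 0 := by
      have h := Polynomial.natDegree_mul hμmonic.ne_zero hk0
      rw [← hk, hdmp] at h
      omega
    have hkmonic : k.Monic := by
      have h := Polynomial.leadingCoeff_mul μ k
      rw [← hk, hmpmonic.leadingCoeff, hμmonic.leadingCoeff, one_mul] at h
      exact h.symm
    have hk1 : k = 1 := hkmonic.natDegree_eq_zero.mp hkdeg
    rw [hk, hk1, mul_one]
  -- finiteness
  apply Set.Finite.subset (Set.finite_Iic c.natAbs)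
  rintro p ⟨hp, hne⟩
  have hdvd : (p : ℤ) ∣ c := by
    by_contra hpc
    exact hne (key p hp hpc)
  have h2 : p ∣ c.natAbs := by
    have := Int.natAbs_dvd_natAbs.mpr hdvd
    simpa using this
  exact Nat.le_of_dvd (Int.natAbs_pos.mpr hcpos.ne') h2
end

section
/- Let A be a nonzero ideal of 𝒪_K and S a finite set of rational primes containing every prime divisor of the absolute norm N(A). Then there exists a pair (a, α), with a a positive integer and α ∈ 𝒪_K, which is an S-normal presentation of A. -/
open NumberField

variable {K : Type*} [Field K] [NumberField K]

/-- `vQ Q A` is the multiplicity of the prime ideal `Q` in the factorization of the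
ideal `A` of the ring of integers. -/
noncomputable def vQ (Q A : Ideal (𝓞 K)) : ℕ :=
  letI := Classical.decEq (Ideal (𝓞 K))
  Multiset.count Q (UniqueFactorizationMonoid.normalizedFactors A)

/-- `(a, α)` is an `S`-normal presentation of the nonzero ideal `A` of `𝓞 K`:
`a` is a positive integer in `A ∩ ℤ`, `α ∈ A`, for every nonzero prime ideal `Q` lying over a
rational prime `p ∉ S` we have `v_Q(a) = v_Q(A) = 0`, and for every nonzero prime ideal `Q`
lying over a rational prime `p ∈ S` we have `v_Q(α) = v_Q(A)`. -/
def IsSNormalPresentation (S : Finset ℕ) (A : Ideal (𝓞 K)) (a : ℕ) (α : 𝓞 K) : Prop :=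
  0 < a ∧ (a : 𝓞 K) ∈ A ∧ α ∈ A ∧
    (∀ Q : Ideal (𝓞 K), Q.IsPrime → Q ≠ ⊥ →
      ∀ p : ℕ, p.Prime → (p : 𝓞 K) ∈ Q → p ∉ S →
        vQ Q (Ideal.span {(a : 𝓞 K)}) = 0 ∧ vQ Q A = 0) ∧
    (∀ Q : Ideal (𝓞 K), Q.IsPrime → Q ≠ ⊥ →
      ∀ p : ℕ, p.Prime → (p : 𝓞 K) ∈ Q → p ∈ S →
        vQ Q (Ideal.span {α}) = vQ Q A)

open UniqueFactorizationMonoid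

set_option linter.unusedSectionVars false

lemma vQ_def [DecidableEq (Ideal (𝓞 K))] (Q A : Ideal (𝓞 K)) :
    vQ Q A = Multiset.count Q (normalizedFactors A) := by
  unfold vQ; congr

lemma coprime_not_both {x y : ℕ} (h : Nat.Coprime x y) {Q : Ideal (𝓞 K)} (hQ : Q.IsPrime)
    (hx : (x : 𝓞 K) ∈ Q) (hy : (y : 𝓞 K) ∈ Q) : False := by
  have h1 : IsCoprime (x : ℤ) (y : ℤ) := Nat.isCoprime_iff_coprime.mpr h
  have h2 : IsCoprime (x : 𝓞 K) (y : 𝓞 K) := by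
    have := h1.map (Int.castRingHom (𝓞 K))
    simpa using this
  obtain ⟨u, v, huv⟩ := h2
  exact hQ.ne_top ((Ideal.eq_top_iff_one Q).mpr
    (huv ▸ Q.add_mem (Q.mul_mem_left u hx) (Q.mul_mem_left v hy)))

lemma exists_prime_rat (Q : Ideal (𝓞 K)) (hQp : Q.IsPrime) (hQ : Q ≠ ⊥) :
    ∃ p : ℕ, p.Prime ∧ (p : 𝓞 K) ∈ Q ∧ p ∣ Ideal.absNorm Q := by
  have h0 : Ideal.absNorm Q ≠ 0 := by simpa [Ideal.absNorm_eq_zero_iff] using hQ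
  have hmem : ((Ideal.absNorm Q : ℕ) : 𝓞 K) ∈ Q := Ideal.absNorm_mem Q
  have hprod : (((Ideal.absNorm Q).primeFactorsList : Multiset ℕ).map
      (Nat.cast : ℕ → 𝓞 K)).prod ∈ Q := by
    rwa [Multiset.map_coe, Multiset.prod_coe, ← Nat.cast_list_prod,
      Nat.prod_primeFactorsList h0]
  obtain ⟨x, hxmem, hxQ⟩ := (hQp.multiset_prod_mem_iff_exists_mem _).mp hprod
  obtain ⟨p, hp, rfl⟩ := Multiset.mem_map.mp hxmem
  exact ⟨p, Nat.prime_of_mem_primeFactorsList hp, hxQ, Nat.dvd_of_mem_primeFactorsList hp⟩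

/-- Existence of an `S`-normal presentation for any nonzero ideal `A` whose norm has all its
prime divisors in the finite set `S` of rational primes. -/
theorem exists_sNormalPresentation
    (K : Type*) [Field K] [NumberField K]
    (S : Finset ℕ) (hS : ∀ p ∈ S, p.Prime)
    (A : Ideal (𝓞 K)) (hA : A ≠ ⊥)
    (hnorm : ∀ p : ℕ, p.Prime → p ∣ Ideal.absNorm A → p ∈ S) :
    ∃ (a : ℕ) (α : 𝓞 K), IsSNormalPresentation S A a α := by
  classical
  set R := 𝓞 K
  set a := Ideal.absNorm A with ha_def
  have ha0 : 0 < a := Nat.pos_of_ne_zero (by simpa [ha_def, Ideal.absNorm_eq_zero_iff] using hA)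
  have haA : (a : R) ∈ A := Ideal.absNorm_mem A
  -- the modulus
  set m : ℕ := ∏ p ∈ S, p with hm_def
  have hm0 : m ≠ 0 := Finset.prod_ne_zero_iff.mpr fun p hp => (hS p hp).ne_zero
  set M : Ideal R := Ideal.span {(m : R)} with hM_def
  have hM0 : M ≠ 0 := by
    simp only [hM_def, ne_eq, Ideal.span_singleton_eq_bot, Submodule.zero_eq_bot]
    exact_mod_cast Nat.cast_ne_zero.mpr hm0
  set T := (normalizedFactors M).toFinset with hT_def
  have hT : ∀ Q : Ideal R, Q ∈ T ↔ Prime Q ∧ Q ∣ M := fun Q => by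
    rw [hT_def, Multiset.mem_toFinset, mem_normalizedFactors_iff hM0]
  -- any prime over p ∈ S is in T
  have hPS : ∀ Q : Ideal R, Q.IsPrime → Q ≠ ⊥ →
      ∀ p : ℕ, p.Prime → (p : R) ∈ Q → p ∈ S → Q ∈ T := by
    intro Q hQp hQ0 p hp hpQ hpS
    have hpm : (p : R) ∣ (m : R) := Nat.cast_dvd_cast (Finset.dvd_prod_of_mem _ hpS)
    obtain ⟨c, hc⟩ := hpm
    have hmQ : (m : R) ∈ Q := hc ▸ Q.mul_mem_right c hpQ
    exact (hT Q).mpr ⟨Ideal.prime_of_isPrime hQ0 hQp,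
      Ideal.dvd_iff_le.mpr ((Ideal.span_singleton_le_iff_mem Q).mpr hmQ)⟩
  -- any prime dividing A is in T
  have hQS : ∀ Q : Ideal R, Q.IsPrime → Q ≠ ⊥ → Q ∣ A → Q ∈ T := by
    intro Q hQp hQ0 hQA
    obtain ⟨p, hp, hpQ, hpN⟩ := exists_prime_rat Q hQp hQ0
    have : p ∣ a := hpN.trans (Ideal.absNorm_dvd_absNorm_of_le (Ideal.le_of_dvd hQA))
    exact hPS Q hQp hQ0 p hp hpQ (hnorm p hp this)
  -- condition 4, independent of α
  have hcond4 : ∀ Q : Ideal R, Q.IsPrime → Q ≠ ⊥ →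
      ∀ p : ℕ, p.Prime → (p : R) ∈ Q → p ∉ S →
        vQ Q (Ideal.span {(a : R)}) = 0 ∧ vQ Q A = 0 := by
    intro Q hQp hQ0 p hp hpQ hpS
    have haQ_ne : (a : R) ∉ Q := by
      intro haQ
      have hpa : ¬ p ∣ a := fun hd => hpS (hnorm p hp hd)
      exact coprime_not_both ((Nat.Prime.coprime_iff_not_dvd hp).mpr hpa) hQp hpQ haQ
    constructor
    · rw [vQ_def]
      by_contra h
      have hmem : Q ∈ normalizedFactors (Ideal.span {(a : R)}) := Multiset.count_ne_zero.mp h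
      have hdvd : Q ∣ Ideal.span {(a : R)} := dvd_of_mem_normalizedFactors hmem
      exact haQ_ne ((Ideal.span_singleton_le_iff_mem Q).mp (Ideal.le_of_dvd hdvd))
    · rw [vQ_def]
      by_contra h
      have hmem : Q ∈ normalizedFactors A := Multiset.count_ne_zero.mp h
      have hQT : Q ∈ T := hQS Q hQp hQ0 (dvd_of_mem_normalizedFactors hmem)
      have hmQ : (m : R) ∈ Q :=
        (Ideal.span_singleton_le_iff_mem Q).mp (Ideal.le_of_dvd ((hT Q).mp hQT).2)
      have hpm : ¬ p ∣ m := by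
        intro hd
        obtain ⟨q, hqS, hq⟩ := (Nat.Prime.prime hp).exists_mem_finset_dvd hd
        exact hpS (((Nat.prime_dvd_prime_iff_eq hp (hS q hqS)).mp hq) ▸ hqS)
      exact coprime_not_both ((Nat.Prime.coprime_iff_not_dvd hp).mpr hpm) hQp hpQ hmQ
  by_cases hTe : ∀ Q, Q ∉ T
  · -- T is empty; take α = a
    refine ⟨a, (a : R), ha0, haA, haA, hcond4, ?_⟩
    intro Q hQp hQ0 p hp hpQ hpS
    exact absurd (hPS Q hQp hQ0 p hp hpQ hpS) (hTe Q)
  · -- T nonempty: CRT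
    push_neg at hTe
    obtain ⟨Q₀, hQ₀⟩ := hTe
    have hβ : ∀ Q ∈ T, ∃ b : R, b ∈ Q ^ (vQ Q A) ∧ b ∉ Q ^ (vQ Q A + 1) := by
      intro Q hQ
      have hQpr := ((hT Q).mp hQ).1
      haveI : Q.IsPrime := Ideal.isPrime_of_prime hQpr
      obtain ⟨b, hb1, hb2⟩ :=
        SetLike.exists_of_lt (Ideal.pow_succ_lt_pow (P := Q) hQpr.ne_zero (vQ Q A))
      exact ⟨b, hb1, hb2⟩
    choose β hβ1 hβ2 using hβ
    obtain ⟨α, hα⟩ := IsDedekindDomain.exists_forall_sub_mem_ideal (s := T) (fun Q => Q)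
      (fun Q => vQ Q A + 1) (fun Q hQ => ((hT Q).mp hQ).1) (fun _ _ _ _ hne => hne)
      (fun Q => β Q.1 Q.2)
    -- α has the right valuation at every Q ∈ T
    have hαT : ∀ Q ∈ T, vQ Q (Ideal.span {α}) = vQ Q A := by
      intro Q hQT
      have hQpr := ((hT Q).mp hQT).1
      haveI : Q.IsPrime := Ideal.isPrime_of_prime hQpr
      have hsub := hα Q hQT
      have hmem : α ∈ Q ^ (vQ Q A) := by
        have : α = (α - β Q hQT) + β Q hQT := by ring
        rw [this]
        exact Submodule.add_mem _ (Ideal.pow_le_pow_right (Nat.le_succ _) hsub) (hβ1 Q hQT)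
      have hnot : α ∉ Q ^ (vQ Q A + 1) := by
        intro h
        exact hβ2 Q hQT (by simpa using Submodule.sub_mem _ h hsub)
      rw [vQ_def, vQ_def]
      rw [Ideal.count_normalizedFactors_eq ((Ideal.span_singleton_le_iff_mem _).mpr hmem)
        (fun h => hnot ((Ideal.span_singleton_le_iff_mem _).mp h))]
      rfl
    have hα0 : α ≠ 0 := by
      intro h
      have hQpr := ((hT Q₀).mp hQ₀).1
      haveI : Q₀.IsPrime := Ideal.isPrime_of_prime hQpr
      have hsub := hα Q₀ hQ₀
      rw [h] at hsub
      exact hβ2 Q₀ hQ₀ (by have h2 := Submodule.neg_mem _ hsub; rwa [zero_sub, neg_neg] at h2)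
    -- α ∈ A
    have hαA : α ∈ A := by
      have hdvd : A ∣ Ideal.span {α} := by
        rw [dvd_iff_normalizedFactors_le_normalizedFactors hA
          (by simpa [Ideal.span_singleton_eq_bot, Submodule.zero_eq_bot] using hα0),
          Multiset.le_iff_count]
        intro Q
        by_cases hc : Multiset.count Q (normalizedFactors A) = 0
        · simp [hc]
        · have hmem : Q ∈ normalizedFactors A := Multiset.count_ne_zero.mp hc
          have hQpr := prime_of_normalized_factor Q hmem
          have hQT : Q ∈ T := hQS Q (Ideal.isPrime_of_prime hQpr) hQpr.ne_zero
            (dvd_of_mem_normalizedFactors hmem)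
          have := hαT Q hQT
          rw [vQ_def, vQ_def] at this
          omega
      exact (Ideal.span_singleton_le_iff_mem A).mp (Ideal.le_of_dvd hdvd)
    refine ⟨a, α, ha0, haA, hαA, hcond4, ?_⟩
    intro Q hQp hQ0 p hp hpQ hpS
    exact hαT Q (hPS Q hQp hQ0 p hp hpQ hpS)
end

section
/- Let K have degree n over ℚ and let A = ⟨a, α⟩ be a nonzero ideal of 𝒪_K with an S-normal presentation (a, α). Then the absolute norm of A satisfies N(A) = gcd(aⁿ, |N_{K/ℚ}(α)|), where N_{K/ℚ}(α) is the field norm of α. -/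
open NumberField

variable {K : Type*} [Field K] [NumberField K]

private lemma vQ_eq_count (Q X : Ideal (𝓞 K)) (inst : DecidableEq (Ideal (𝓞 K))) :
    vQ Q X = @Multiset.count _ inst Q (UniqueFactorizationMonoid.normalizedFactors X) := by
  unfold vQ
  congr!

private lemma vQ_pos_of_dvd {Q X : Ideal (𝓞 K)} (hQ : Prime Q) (hX : X ≠ 0) (h : Q ∣ X) :
    0 < vQ Q X := by
  classical
  rw [vQ_eq_count Q X _]
  exact Multiset.count_pos.mpr
    ((UniqueFactorizationMonoid.mem_normalizedFactors_iff hX).mpr ⟨hQ, h⟩)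

set_option synthInstance.maxHeartbeats 1000000 in
set_option maxHeartbeats 1000000 in
private lemma exists_char (Q : Ideal (𝓞 K)) (hQ : Q.IsPrime) (hb : Q ≠ ⊥) :
    ∃ p : ℕ, p.Prime ∧ (p : 𝓞 K) ∈ Q ∧
      ∀ r : ℕ, r.Prime → r ∣ Ideal.absNorm Q → r = p := by
  haveI : Q.IsMaximal := hQ.isMaximal hb
  letI : Fintype (𝓞 K ⧸ Q) := @Fintype.ofFinite _ (Ideal.finiteQuotientOfFreeOfNeBot Q hb)
  set p := ringChar (𝓞 K ⧸ Q) with hpdef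
  haveI : CharP (𝓞 K ⧸ Q) p := ringChar.charP _
  have hpprime : p.Prime := CharP.char_is_prime (𝓞 K ⧸ Q) p
  letI : Field (𝓞 K ⧸ Q) := Ideal.Quotient.field Q
  refine ⟨p, hpprime, ?_, ?_⟩
  · have h0 : ((p : ℕ) : 𝓞 K ⧸ Q) = 0 := CharP.cast_eq_zero _ p
    rwa [← map_natCast (Ideal.Quotient.mk Q), Ideal.Quotient.eq_zero_iff_mem] at h0
  · intro r hr hdvd
    obtain ⟨m, _, hcard⟩ := FiniteField.card (𝓞 K ⧸ Q) p
    have hnorm : Ideal.absNorm Q = Fintype.card (𝓞 K ⧸ Q) := by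
      rw [Ideal.absNorm_apply, Submodule.cardQuot_apply, Nat.card_eq_fintype_card]
    rw [hnorm, hcard] at hdvd
    exact (Nat.prime_dvd_prime_iff_eq hr hpprime).mp (hr.dvd_of_dvd_pow hdvd)

/-- Two rational primes contained in the same prime ideal coincide. -/
private lemma prime_mem_eq {Q : Ideal (𝓞 K)} (hQ : Q.IsPrime) {p q : ℕ}
    (hp : p.Prime) (hq : q.Prime) (hpQ : (p : 𝓞 K) ∈ Q) (hqQ : (q : 𝓞 K) ∈ Q) : p = q := by
  by_contra hne
  have hcop : IsCoprime (p : ℤ) (q : ℤ) := by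
    rw [Int.isCoprime_iff_gcd_eq_one]
    exact_mod_cast (Nat.coprime_primes hp hq).mpr hne
  obtain ⟨u, v, huv⟩ := hcop
  have h1 : (1 : 𝓞 K) ∈ Q := by
    have := congrArg (algebraMap ℤ (𝓞 K)) huv
    push_cast at this
    rw [← this]
    exact Q.add_mem (Q.mul_mem_left _ hpQ) (Q.mul_mem_left _ hqQ)
  exact hQ.ne_top (Q.eq_top_iff_one.mpr h1)

/-- If `A = ⟨a, α⟩` has `S`-normal presentation `(a, α)` and `K` has degree `n`, then
`N(A) = gcd(aⁿ, |N_{K/ℚ}(α)|)`. -/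
theorem absNorm_eq_gcd_of_sNormalPresentation
    (K : Type*) [Field K] [NumberField K]
    (n : ℕ) (hn : Module.finrank ℚ K = n)
    (S : Finset ℕ) (hS : ∀ p ∈ S, p.Prime)
    (A : Ideal (𝓞 K)) (hA : A ≠ ⊥)
    (a : ℕ) (α : 𝓞 K)
    (hpres : IsSNormalPresentation S A a α)
    (hgen : A = Ideal.span {(a : 𝓞 K), α}) :
    Ideal.absNorm A = Nat.gcd (a ^ n) ((Algebra.norm ℤ α).natAbs) := by
  classical
  obtain ⟨hapos, haA, hαA, hout, hin⟩ := hpres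
  have hrank : Module.finrank ℤ (𝓞 K) = n := by rw [RingOfIntegers.rank, hn]
  have hnpos : 0 < n := hn ▸ Module.finrank_pos
  have hNa : ∀ b : ℕ, Ideal.absNorm (Ideal.span {(b : 𝓞 K)}) = b ^ n := by
    intro b
    have hcast : ((b : ℤ) : 𝓞 K) = (b : 𝓞 K) := by push_cast; ring
    rw [Ideal.absNorm_span_singleton, ← hcast,
      show ((b : ℤ) : 𝓞 K) = algebraMap ℤ (𝓞 K) (b : ℤ) from rfl,
      Algebra.norm_algebraMap_of_basis (Module.Free.chooseBasis ℤ (𝓞 K)),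
      ← Module.finrank_eq_card_chooseBasisIndex, hrank, Int.natAbs_pow, Int.natAbs_natCast]
  have hdvd1 : Ideal.absNorm A ∣ a ^ n := by
    rw [← hNa a]
    exact Ideal.absNorm_dvd_absNorm_of_le ((Ideal.span_singleton_le_iff_mem _).mpr haA)
  have hdvd2 : Ideal.absNorm A ∣ (Algebra.norm ℤ α).natAbs := by
    rw [← Ideal.absNorm_span_singleton]
    exact Ideal.absNorm_dvd_absNorm_of_le ((Ideal.span_singleton_le_iff_mem _).mpr hαA)
  by_cases hα0 : α = 0
  · subst hα0
    have hA' : A = Ideal.span {(a : 𝓞 K)} := by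
      rw [hgen, show ({(a : 𝓞 K), 0} : Set (𝓞 K)) = insert (a : 𝓞 K) {0} from rfl,
        Ideal.span_insert, Ideal.span_singleton_eq_bot.mpr rfl, sup_bot_eq]
    have hz : (Algebra.norm ℤ (0 : 𝓞 K)).natAbs = 0 := by
      rw [← Ideal.absNorm_span_singleton]; simp
    rw [hz, Nat.gcd_zero_right, hA', hNa]
  -- main case : α ≠ 0
  have hA0 : A ≠ 0 := by rwa [Submodule.zero_eq_bot]
  have hα' : Ideal.span {α} ≠ (0 : Ideal (𝓞 K)) := by
    rw [Submodule.zero_eq_bot]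
    simpa [Ideal.span_singleton_eq_bot] using hα0
  -- A divides (α)
  have hcount : ∀ Q : Ideal (𝓞 K), vQ Q A ≤ vQ Q (Ideal.span {α}) := by
    intro Q
    rcases Nat.eq_zero_or_pos (vQ Q A) with h0 | hpos
    · rw [h0]; exact Nat.zero_le _
    · have hQmem : Q ∈ UniqueFactorizationMonoid.normalizedFactors A := by
        rw [vQ_eq_count Q A _] at hpos
        exact Multiset.count_pos.mp hpos
      have hQp : Prime Q := UniqueFactorizationMonoid.prime_of_normalized_factor Q hQmem
      have hQprime : Q.IsPrime := Ideal.isPrime_of_prime hQp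
      have hQb : Q ≠ ⊥ := by rw [← Submodule.zero_eq_bot]; exact hQp.ne_zero
      obtain ⟨p, hp, hpQ, -⟩ := exists_char Q hQprime hQb
      by_cases hpS : p ∈ S
      · rw [hin Q hQprime hQb p hp hpQ hpS]
      · exact absurd (hout Q hQprime hQb p hp hpQ hpS).2 (Nat.pos_iff_ne_zero.mp hpos)
  have hAdvd : A ∣ Ideal.span {α} := by
    rw [UniqueFactorizationMonoid.dvd_iff_normalizedFactors_le_normalizedFactors hA0 hα',
      Multiset.le_iff_count]
    intro Q
    have h := hcount Q
    rwa [vQ_eq_count Q A _, vQ_eq_count Q (Ideal.span {α}) _] at h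
  obtain ⟨B, hB⟩ := hAdvd
  have hB0 : B ≠ 0 := by rintro rfl; rw [mul_zero] at hB; exact hα' hB
  have hNB0 : Ideal.absNorm B ≠ 0 := by
    rw [ne_eq, Ideal.absNorm_eq_zero_iff, ← Submodule.zero_eq_bot]; exact hB0
  have hNA0 : Ideal.absNorm A ≠ 0 := by
    rw [ne_eq, Ideal.absNorm_eq_zero_iff]; exact hA
  have hNα0 : (Algebra.norm ℤ α).natAbs ≠ 0 := by
    rw [← Ideal.absNorm_span_singleton, ne_eq, Ideal.absNorm_eq_zero_iff,
      ← Submodule.zero_eq_bot]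
    exact hα'
  have ha0 : a ^ n ≠ 0 := pow_ne_zero _ hapos.ne'
  have hNmul : (Algebra.norm ℤ α).natAbs = Ideal.absNorm A * Ideal.absNorm B := by
    rw [← Ideal.absNorm_span_singleton, hB, map_mul]
  -- vQ additivity on span α = A * B
  have hvadd : ∀ Q : Ideal (𝓞 K), vQ Q (Ideal.span {α}) = vQ Q A + vQ Q B := by
    intro Q
    rw [vQ_eq_count Q _ _, vQ_eq_count Q A _, vQ_eq_count Q B _, hB,
      UniqueFactorizationMonoid.normalizedFactors_mul hA0 hB0, Multiset.count_add]
  -- no prime of S divides absNorm B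
  have hpB : ∀ p ∈ S, ¬ p ∣ Ideal.absNorm B := by
    intro p hpS hdvd
    have hp : p.Prime := hS p hpS
    have hBprod : (UniqueFactorizationMonoid.normalizedFactors B).prod = B :=
      associated_iff_eq.mp (UniqueFactorizationMonoid.prod_normalizedFactors hB0)
    have hdvd' : p ∣ (Multiset.map Ideal.absNorm
        (UniqueFactorizationMonoid.normalizedFactors B)).prod := by
      rw [← map_multiset_prod, hBprod]; exact hdvd
    obtain ⟨nq, hnqmem, hnqdvd⟩ := hp.prime.exists_mem_multiset_dvd hdvd'
    obtain ⟨Q, hQmem, rfl⟩ := Multiset.mem_map.mp hnqmem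
    have hQp : Prime Q := UniqueFactorizationMonoid.prime_of_normalized_factor Q hQmem
    have hQprime : Q.IsPrime := Ideal.isPrime_of_prime hQp
    have hQb : Q ≠ ⊥ := by rw [← Submodule.zero_eq_bot]; exact hQp.ne_zero
    obtain ⟨q, hq, hqQ, huniq⟩ := exists_char Q hQprime hQb
    have hpq : p = q := huniq p hp hnqdvd
    have hvB : 0 < vQ Q B := by
      refine vQ_pos_of_dvd hQp hB0 ?_
      exact UniqueFactorizationMonoid.dvd_of_mem_normalizedFactors hQmem
    have := hin Q hQprime hQb p hp (hpq ▸ hqQ) hpS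
    rw [hvadd Q] at this
    omega
  -- conclude by comparing factorizations
  refine Nat.dvd_antisymm (Nat.dvd_gcd hdvd1 hdvd2) ?_
  rw [← Nat.factorization_le_iff_dvd (Nat.gcd_ne_zero_left ha0) hNA0,
    Nat.factorization_gcd ha0 hNα0, Finsupp.le_def]
  intro p
  rw [Finsupp.inf_apply]
  by_cases hpp : p.Prime
  · by_cases hpS : p ∈ S
    · have hBzero : (Ideal.absNorm B).factorization p = 0 :=
        Nat.factorization_eq_zero_of_not_dvd (hpB p hpS)
      rw [hNmul, Nat.factorization_mul hNA0 hNB0]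
      simp only [Finsupp.coe_add, Pi.add_apply, hBzero, add_zero]
      exact min_le_right _ _
    · -- p ∉ S : p does not divide a
      have hpa : ¬ p ∣ a := by
        intro hpa
        have hpne : ((p : ℕ) : 𝓞 K) ≠ 0 := Nat.cast_ne_zero.mpr hpp.ne_zero
        have hptop : Ideal.span {(p : 𝓞 K)} ≠ ⊤ := by
          intro htop
          have := hNa p
          rw [htop, Ideal.absNorm_top] at this
          have h1 : 1 < p ^ n := Nat.one_lt_pow hnpos.ne' hpp.one_lt
          omega
        obtain ⟨Q, hQmax, hQle⟩ := Ideal.exists_le_maximal _ hptop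
        have hpQ : (p : 𝓞 K) ∈ Q := hQle (Ideal.subset_span rfl)
        have hQb : Q ≠ ⊥ := by
          intro hbot
          rw [hbot] at hpQ
          exact hpne ((Ideal.mem_bot).mp hpQ)
        have hQprime : Q.IsPrime := hQmax.isPrime
        have hQp : Prime Q := Ideal.prime_of_isPrime hQb hQprime
        have hvq := (hout Q hQprime hQb p hpp hpQ hpS).1
        obtain ⟨c, hc⟩ := hpa
        have hQdvd : Q ∣ Ideal.span {(a : 𝓞 K)} := by
          rw [Ideal.dvd_iff_le, Ideal.span_singleton_le_iff_mem]
          have : (a : 𝓞 K) = (p : 𝓞 K) * (c : 𝓞 K) := by rw [← Nat.cast_mul, ← hc]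
          rw [this]
          exact Q.mul_mem_right _ hpQ
        have hsa : Ideal.span {(a : 𝓞 K)} ≠ (0 : Ideal (𝓞 K)) := by
          rw [Submodule.zero_eq_bot, ne_eq, Ideal.span_singleton_eq_bot]
          exact Nat.cast_ne_zero.mpr hapos.ne'
        exact (Nat.pos_iff_ne_zero.mp (vQ_pos_of_dvd hQp hsa hQdvd)) hvq
      have hpan : ¬ p ∣ a ^ n := fun h => hpa (hpp.dvd_of_dvd_pow h)
      rw [Nat.factorization_eq_zero_of_not_dvd hpan]
      simp
  · rw [Nat.factorization_eq_zero_of_not_prime _ hpp]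
    simp
end

section
/- Let A be a nonzero ideal of 𝒪_K with S-normal presentation (a, α). Let γ = 1/α in K, let g be the positive generator of the ideal α𝒪_K ∩ ℤ of ℤ, and write g = g₁g₂ with g₁ and g₂ coprime positive integers such that every prime divisor of g₁ lies in S and no prime divisor of g₂ lies in S. Then the inverse fractional ideal satisfies A⁻¹ = 𝒪_K + g₂γ𝒪_K, i.e. A⁻¹ is the fractional ideal generated by 1 and g₂γ. -/
open NumberField
open scoped nonZeroDivisors

variable {K : Type*} [Field K] [NumberField K]

lemma vQ_eq [DecidableEq (Ideal (𝓞 K))] (Q A : Ideal (𝓞 K)) :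
    vQ Q A = Multiset.count Q (UniqueFactorizationMonoid.normalizedFactors A) := by
  unfold vQ
  congr 1

section Aux

open UniqueFactorizationMonoid

variable {R : Type*} [CommRing R] [IsDedekindDomain R] [DecidableEq (Ideal R)]

lemma nf_sup {I J : Ideal R} (hI : I ≠ ⊥) (hJ : J ≠ ⊥) :
    normalizedFactors (I ⊔ J) = normalizedFactors I ∩ normalizedFactors J := by
  rw [sup_eq_prod_inf_factors hI hJ, normalizedFactors_prod_of_prime]
  · congr; exact Subsingleton.elim _ _
  intro p hp
  exact prime_of_normalized_factor p (Multiset.mem_of_le (@Multiset.inter_le_left _ Submodule.decidableEq _ _) hp)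

lemma count_nf_eq_zero {Q I : Ideal R} (hQ : Prime Q) (hI : I ≠ ⊥) :
    Multiset.count Q (normalizedFactors I) = 0 ↔ ¬ I ≤ Q := by
  rw [Multiset.count_eq_zero, mem_normalizedFactors_iff hI, Ideal.dvd_iff_le]
  simp [hQ]

lemma exists_rat_prime (Q : Ideal (𝓞 K)) (hQp : Q.IsPrime) (hQ : Q ≠ ⊥) :
    ∃ p : ℕ, p.Prime ∧ ∀ n : ℕ, (n : 𝓞 K) ∈ Q ↔ p ∣ n := by
  set C := Q.comap (algebraMap ℤ (𝓞 K)) with hC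
  haveI : C.IsPrime := Ideal.IsPrime.comap _
  obtain ⟨d, hd⟩ := (IsPrincipalIdealRing.principal C).principal
  have hdC : C = Ideal.span {d} := hd
  have hcast : ∀ m : ℤ, algebraMap ℤ (𝓞 K) m = (m : 𝓞 K) := fun m =>
    eq_intCast (algebraMap ℤ (𝓞 K)) m
  have hmem : ∀ m : ℤ, m ∈ C ↔ (m : 𝓞 K) ∈ Q := by
    intro m; rw [hC, Ideal.mem_comap, hcast]
  have hnormC : (Ideal.absNorm Q : ℤ) ∈ C := by
    rw [hmem]
    exact_mod_cast Ideal.absNorm_mem Q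
  have hd0 : d ≠ 0 := by
    rintro rfl
    rw [hdC, Ideal.span_singleton_eq_bot.mpr rfl, Ideal.mem_bot] at hnormC
    exact (Ideal.absNorm_eq_zero_iff.not.mpr hQ) (by exact_mod_cast hnormC)
  have hdp : Prime d := by
    rw [← Ideal.span_singleton_prime hd0, ← hdC]
    exact ‹C.IsPrime›
  refine ⟨d.natAbs, Int.prime_iff_natAbs_prime.mp hdp, fun n => ?_⟩
  have h2 : (n : 𝓞 K) ∈ Q ↔ ((n : ℤ) : 𝓞 K) ∈ Q := by norm_cast
  rw [h2, ← hmem, hdC, Ideal.mem_span_singleton, ← Int.natAbs_dvd]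
  exact_mod_cast Iff.rfl

end Aux

open UniqueFactorizationMonoid

/-- Inversion for `S`-normal presentations: if `A` has `S`-normal presentation `(a, α)`,
`γ = 1/α`, `g > 0` generates `α𝒪_K ∩ ℤ`, and `g = g₁g₂` with `g₁, g₂` coprime, all prime
divisors of `g₁` in `S` and no prime divisor of `g₂` in `S`, then the inverse fractional
ideal `A⁻¹` is generated by `1` and `g₂γ`. -/
theorem sNormalPresentation_inv
    (K : Type*) [Field K] [NumberField K]
    (S : Finset ℕ) (hS : ∀ p ∈ S, p.Prime)
    (A : Ideal (𝓞 K)) (hA : A ≠ ⊥)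
    (a : ℕ) (α : 𝓞 K) (hα : α ≠ 0)
    (hpres : IsSNormalPresentation S A a α)
    (g g₁ g₂ : ℕ) (hg : 0 < g)
    (hgen : (Ideal.span {α}).comap (algebraMap ℤ (𝓞 K)) = Ideal.span {(g : ℤ)})
    (hsplit : g = g₁ * g₂) (hg₁ : 0 < g₁) (hg₂ : 0 < g₂)
    (hcop : Nat.Coprime g₁ g₂)
    (hg₁S : ∀ p : ℕ, p.Prime → p ∣ g₁ → p ∈ S)
    (hg₂S : ∀ p : ℕ, p.Prime → p ∣ g₂ → p ∉ S) :
    (A : FractionalIdeal (𝓞 K)⁰ K)⁻¹ =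
      1 + FractionalIdeal.spanSingleton (𝓞 K)⁰
        ((g₂ : K) * (algebraMap (𝓞 K) K α)⁻¹) := by
  classical
  obtain ⟨hapos, haA, hαA, hout, hin⟩ := hpres
  have hg₂0 : ((g₂ : ℕ) : 𝓞 K) ≠ 0 := by exact_mod_cast hg₂.ne'
  have hg₁0 : ((g₁ : ℕ) : 𝓞 K) ≠ 0 := by exact_mod_cast hg₁.ne'
  have hg0 : ((g : ℕ) : 𝓞 K) ≠ 0 := by exact_mod_cast hg.ne'
  have hIα : Ideal.span {α} ≠ ⊥ := by simpa [Ideal.span_singleton_eq_bot] using hα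
  have hI2 : Ideal.span {((g₂ : ℕ) : 𝓞 K)} ≠ ⊥ := by
    simpa [Ideal.span_singleton_eq_bot] using hg₂0
  have hI1 : Ideal.span {((g₁ : ℕ) : 𝓞 K)} ≠ ⊥ := by
    simpa [Ideal.span_singleton_eq_bot] using hg₁0
  have hsupb : Ideal.span {α} ⊔ Ideal.span {((g₂ : ℕ) : 𝓞 K)} ≠ ⊥ := fun h =>
    hIα (le_bot_iff.mp (h ▸ le_sup_left))
  have hmulb : A * (Ideal.span {α} ⊔ Ideal.span {((g₂ : ℕ) : 𝓞 K)}) ≠ ⊥ := by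
    exact mul_ne_zero hA hsupb
  have hkey : A * (Ideal.span {α} ⊔ Ideal.span {((g₂ : ℕ) : 𝓞 K)}) = Ideal.span {α} := by
    have hnf : normalizedFactors (A * (Ideal.span {α} ⊔ Ideal.span {((g₂ : ℕ) : 𝓞 K)})) =
        normalizedFactors (Ideal.span {α}) := by
      rw [Multiset.ext]
      intro Q
      by_cases hQpr : Prime Q
      · have hQne : Q ≠ ⊥ := by simpa [Submodule.zero_eq_bot] using hQpr.ne_zero
        have hQprime : Q.IsPrime := Ideal.isPrime_of_prime hQpr
        obtain ⟨p, hp, hpiff⟩ := exists_rat_prime Q hQprime hQne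
        rw [normalizedFactors_mul (by simpa [Submodule.zero_eq_bot] using hA)
          (by simpa [Submodule.zero_eq_bot] using hsupb), Multiset.count_add,
          nf_sup hIα hI2, Multiset.count_inter]
        by_cases hpS : p ∈ S
        · have h1 : vQ Q (Ideal.span {α}) = vQ Q A :=
            hin Q hQprime hQne p hp ((hpiff p).mpr dvd_rfl) hpS
          have h2 : Multiset.count Q (normalizedFactors (Ideal.span {((g₂ : ℕ) : 𝓞 K)})) = 0 := by
            rw [count_nf_eq_zero hQpr hI2, Ideal.span_singleton_le_iff_mem]
            intro hmem
            exact hg₂S p hp ((hpiff g₂).mp hmem) hpS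
          rw [vQ_eq, vQ_eq] at h1
          omega
        · have h1 : vQ Q A = 0 := (hout Q hQprime hQne p hp ((hpiff p).mpr dvd_rfl) hpS).2
          rw [vQ_eq] at h1
          have hgmem : ((g : ℕ) : 𝓞 K) ∈ Ideal.span {α} := by
            have h := Ideal.mem_span_singleton_self (g : ℤ)
            rw [← hgen, Ideal.mem_comap] at h
            rwa [eq_intCast (algebraMap ℤ (𝓞 K)), Int.cast_natCast] at h
          have hgsplit : ((g : ℕ) : 𝓞 K) = ((g₁ : ℕ) : 𝓞 K) * ((g₂ : ℕ) : 𝓞 K) := by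
            rw [hsplit]; push_cast; ring
          have hspan : Ideal.span {((g : ℕ) : 𝓞 K)} =
              Ideal.span {((g₁ : ℕ) : 𝓞 K)} * Ideal.span {((g₂ : ℕ) : 𝓞 K)} := by
            rw [Ideal.span_singleton_mul_span_singleton, hgsplit]
          have hgb : Ideal.span {((g : ℕ) : 𝓞 K)} ≠ ⊥ := by
            simpa [Ideal.span_singleton_eq_bot] using hg0
          have hle := count_le_of_ideal_ge ((Ideal.span_singleton_le_iff_mem _).mpr hgmem) hgb Q
          rw [hspan, normalizedFactors_mul (by simpa [Submodule.zero_eq_bot] using hI1)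
            (by simpa [Submodule.zero_eq_bot] using hI2), Multiset.count_add] at hle
          have hz : Multiset.count Q (normalizedFactors (Ideal.span {((g₁ : ℕ) : 𝓞 K)})) = 0 := by
            rw [count_nf_eq_zero hQpr hI1, Ideal.span_singleton_le_iff_mem]
            intro hmem
            exact hpS (hg₁S p hp ((hpiff g₁).mp hmem))
          omega
      · rw [Multiset.count_eq_zero_of_notMem, Multiset.count_eq_zero_of_notMem] <;>
          exact fun h => hQpr (prime_of_normalized_factor _ h)
    calc A * (Ideal.span {α} ⊔ Ideal.span {((g₂ : ℕ) : 𝓞 K)})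
        = (normalizedFactors
            (A * (Ideal.span {α} ⊔ Ideal.span {((g₂ : ℕ) : 𝓞 K)}))).prod :=
          (prod_normalizedFactors_eq_self hmulb).symm
      _ = (normalizedFactors (Ideal.span {α})).prod := by rw [hnf]
      _ = Ideal.span {α} := prod_normalizedFactors_eq_self hIα
  -- fractional ideal part
  set β : K := algebraMap (𝓞 K) K α with hβ
  have hβ0 : β ≠ 0 := by
    simpa [hβ, map_eq_zero_iff _ (IsFractionRing.injective (𝓞 K) K)] using hα
  have hsβ0 : FractionalIdeal.spanSingleton (𝓞 K)⁰ β ≠ 0 := by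
    rw [Ne, FractionalIdeal.spanSingleton_eq_zero_iff]
    exact hβ0
  have hstep : (1 + FractionalIdeal.spanSingleton (𝓞 K)⁰ ((g₂ : K) * β⁻¹)) *
      FractionalIdeal.spanSingleton (𝓞 K)⁰ β =
      ((Ideal.span {α} ⊔ Ideal.span {((g₂ : ℕ) : 𝓞 K)} : Ideal (𝓞 K)) :
        FractionalIdeal (𝓞 K)⁰ K) := by
    rw [add_mul, one_mul, FractionalIdeal.spanSingleton_mul_spanSingleton,
      FractionalIdeal.coeIdeal_sup, FractionalIdeal.coeIdeal_span_singleton,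
      FractionalIdeal.coeIdeal_span_singleton, map_natCast]
    congr 1
    field_simp
  have hAX : (A : FractionalIdeal (𝓞 K)⁰ K) *
      (1 + FractionalIdeal.spanSingleton (𝓞 K)⁰ ((g₂ : K) * β⁻¹)) = 1 := by
    apply mul_right_cancel₀ hsβ0
    rw [mul_assoc, hstep, one_mul, ← FractionalIdeal.coeIdeal_mul, hkey,
      FractionalIdeal.coeIdeal_span_singleton]
  exact inv_eq_of_mul_eq_one_right hAX
end
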